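/- Let (A, μ) be an associative algebra and r ∈ A⊗A antisymmetric (τ(r) = −r). Define Δ_r(a) = a·r − r·a. Then the balanceator of (A, μ, Δ_r) vanishes: B(a,b) = 0 for all a, b ∈ A. -/
import Mathlib

open TensorProduct

section
variable {k A : Type*} [Field k] [NonUnitalRing A] [Module k A]
  [SMulCommClass k A A] [IsScalarTower k A A]

/-- The coboundary comultiplication `Δ_r(a) = a·r − r·a`. -/
noncomputable def coboundaryComul (k : Type*) [Field k] [NonUnitalRing A] [Module k A]
    [SMulCommClass k A A] [IsScalarTower k A A] (r : A ⊗[k] A) (a : A) : A ⊗[k] A :=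
  TensorProduct.map (LinearMap.mulLeft k a) LinearMap.id r -
    TensorProduct.map LinearMap.id (LinearMap.mulRight k a) r

/-- The balanceator `B(a,b) = Σ ab₂⊗b₁ − Σ b₂⊗b₁a + Σ a₁⊗ba₂ − Σ a₁b⊗a₂` associated
with a comultiplication `Δ`. -/
noncomputable def balanceator (k : Type*) [Field k] [NonUnitalRing A] [Module k A]
    [SMulCommClass k A A] [IsScalarTower k A A]
    (Δ : A → A ⊗[k] A) (a b : A) : A ⊗[k] A :=
  TensorProduct.map (LinearMap.mulLeft k a) LinearMap.id (TensorProduct.comm k A A (Δ b)) -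
    TensorProduct.map LinearMap.id (LinearMap.mulRight k a) (TensorProduct.comm k A A (Δ b)) +
      TensorProduct.map LinearMap.id (LinearMap.mulLeft k b) (Δ a) -
        TensorProduct.map (LinearMap.mulRight k b) LinearMap.id (Δ a)

/-- Auxiliary linear map `M(x⊗y) = ax⊗by − (ax)b⊗y − x⊗(by)a + xb⊗ya`. -/
noncomputable def balAux (k : Type*) [Field k] [NonUnitalRing A] [Module k A]
    [SMulCommClass k A A] [IsScalarTower k A A] (a b : A) :
    A ⊗[k] A →ₗ[k] A ⊗[k] A :=
  TensorProduct.map (LinearMap.mulLeft k a) (LinearMap.mulLeft k b) -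
    TensorProduct.map ((LinearMap.mulRight k b).comp (LinearMap.mulLeft k a)) LinearMap.id -
      TensorProduct.map LinearMap.id ((LinearMap.mulRight k a).comp (LinearMap.mulLeft k b)) +
        TensorProduct.map (LinearMap.mulRight k b) (LinearMap.mulRight k a)

lemma balanceator_eq_aux (r : A ⊗[k] A) (a b : A) :
    balanceator k (coboundaryComul k r) a b =
      balAux k a b r + balAux k a b (TensorProduct.comm k A A r) := by
  induction r using TensorProduct.induction_on with
  | zero => simp [balanceator, coboundaryComul, balAux]
  | tmul x y =>
      simp only [balanceator, coboundaryComul, balAux, map_sub, map_add,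
        TensorProduct.map_tmul, TensorProduct.comm_tmul, LinearMap.sub_apply,
        LinearMap.add_apply, LinearMap.mulLeft_apply, LinearMap.mulRight_apply,
        LinearMap.id_coe, id_eq, LinearMap.comp_apply, mul_assoc]
      abel
  | add p q hp hq =>
      simp only [balanceator, coboundaryComul, balAux, map_add, map_sub,
        LinearMap.sub_apply, LinearMap.add_apply] at hp hq ⊢
      abel_nf at hp hq ⊢
      linear_combination (norm := abel_nf) hp + hq

/-- If `r` is antisymmetric, the balanceator of `(A, μ, Δ_r)` vanishes. -/
theorem balanceator_coboundary_eq_zero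
    (r : A ⊗[k] A) (hanti : TensorProduct.comm k A A r = -r) :
    ∀ a b : A, balanceator k (coboundaryComul k r) a b = 0 := by
  intro a b
  rw [balanceator_eq_aux, hanti, map_neg, add_neg_cancel]

end
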